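/- Let Γ be a subgroup of SL(2,ℝ), ρ : Γ → GL(2,ℂ) a group homomorphism, and h a ρ-equivariant meromorphic function on ℍ. Then S(h) is an automorphic form of weight 4 for Γ: for every γ = [[a,b],[c,d]] ∈ Γ and every z ∈ ℍ at which h is analytic with h'(z) ≠ 0, ρ(γ)₂₁ h(z) + ρ(γ)₂₂ ≠ 0, and h is analytic at γ·z with h'(γ·z) ≠ 0, one has S(h)(γ·z) = (cz+d)⁴ · S(h)(z). -/

import Mathlib

/-- The Schwarz derivative `S(f) = f'''/f' - (3/2)(f''/f')²`. -/
noncomputable def schwarzian (f : ℂ → ℂ) (z : ℂ) : ℂ :=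
  iteratedDeriv 3 f z / deriv f z - (3 / 2) * (iteratedDeriv 2 f z / deriv f z) ^ 2

/-- The automorphy factor `cz + d` for `γ = [[a,b],[c,d]] ∈ SL(2,ℝ)`. -/
noncomputable def jfac (γ : Matrix.SpecialLinearGroup (Fin 2) ℝ) (z : ℂ) : ℂ :=
  (((γ : Matrix (Fin 2) (Fin 2) ℝ) 1 0 : ℝ) : ℂ) * z +
    (((γ : Matrix (Fin 2) (Fin 2) ℝ) 1 1 : ℝ) : ℂ)

/-- The Möbius action `γ·z = (az+b)/(cz+d)` of `γ ∈ SL(2,ℝ)` on `z ∈ ℂ`. -/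
noncomputable def moebius (γ : Matrix.SpecialLinearGroup (Fin 2) ℝ) (z : ℂ) : ℂ :=
  ((((γ : Matrix (Fin 2) (Fin 2) ℝ) 0 0 : ℝ) : ℂ) * z +
    (((γ : Matrix (Fin 2) (Fin 2) ℝ) 0 1 : ℝ) : ℂ)) / jfac γ z

/-- `h` is `ρ`-equivariant: `h(γ·z) = ρ(γ)·h(z)` whenever both sides are defined. -/
def IsRhoEquivariant (Γ : Subgroup (Matrix.SpecialLinearGroup (Fin 2) ℝ))
    (ρ : Γ →* GL (Fin 2) ℂ) (h : ℂ → ℂ) : Prop :=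
  ∀ γ : Γ, ∀ z : ℂ, 0 < z.im → AnalyticAt ℂ h z → AnalyticAt ℂ h (moebius γ z) →
    (ρ γ : Matrix (Fin 2) (Fin 2) ℂ) 1 0 * h z + (ρ γ : Matrix (Fin 2) (Fin 2) ℂ) 1 1 ≠ 0 →
    h (moebius γ z) =
      ((ρ γ : Matrix (Fin 2) (Fin 2) ℂ) 0 0 * h z + (ρ γ : Matrix (Fin 2) (Fin 2) ℂ) 0 1) /
        ((ρ γ : Matrix (Fin 2) (Fin 2) ℂ) 1 0 * h z + (ρ γ : Matrix (Fin 2) (Fin 2) ℂ) 1 1)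

open Filter

lemma analyticAt_deriv {f : ℂ → ℂ} {x : ℂ} (h : AnalyticAt ℂ f x) : AnalyticAt ℂ (deriv f) x := by
  have h2 : AnalyticAt ℂ ((ContinuousLinearMap.apply ℂ ℂ (1:ℂ)) ∘ (fderiv ℂ f)) x :=
    ((ContinuousLinearMap.apply ℂ ℂ (1:ℂ)).analyticAt _).comp h.fderiv
  have : deriv f = (ContinuousLinearMap.apply ℂ ℂ (1:ℂ)) ∘ (fderiv ℂ f) := by
    funext y; simp [Function.comp, fderiv_apply_one_eq_deriv]
  rw [this]; exact h2

lemma id2 (f : ℂ → ℂ) : iteratedDeriv 2 f = deriv (deriv f) := by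
  rw [iteratedDeriv_succ, iteratedDeriv_one]

lemma id3 (f : ℂ → ℂ) : iteratedDeriv 3 f = deriv (iteratedDeriv 2 f) := by
  rw [iteratedDeriv_succ]

-- eventual conditions for composition
lemma ev_comp {f g : ℂ → ℂ} {z : ℂ} (hf : AnalyticAt ℂ f (g z)) (hg : AnalyticAt ℂ g z) :
    ∀ᶠ w in nhds z, AnalyticAt ℂ f (g w) ∧ AnalyticAt ℂ g w :=
  (hg.continuousAt.eventually hf.eventually_analyticAt).and hg.eventually_analyticAt

lemma deriv_comp_pt {f g : ℂ → ℂ} {z : ℂ} (hf : AnalyticAt ℂ f (g z)) (hg : AnalyticAt ℂ g z) :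
    deriv (fun w => f (g w)) z = deriv f (g z) * deriv g z :=
  deriv_comp z hf.differentiableAt hg.differentiableAt

lemma deriv_comp_ev {f g : ℂ → ℂ} {z : ℂ} (hf : AnalyticAt ℂ f (g z)) (hg : AnalyticAt ℂ g z) :
    deriv (fun w => f (g w)) =ᶠ[nhds z] fun w => deriv f (g w) * deriv g w := by
  filter_upwards [ev_comp hf hg] with w hw using deriv_comp_pt hw.1 hw.2

lemma i2_comp {f g : ℂ → ℂ} {z : ℂ} (hf : AnalyticAt ℂ f (g z)) (hg : AnalyticAt ℂ g z) :
    iteratedDeriv 2 (fun w => f (g w)) z =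
      iteratedDeriv 2 f (g z) * (deriv g z) ^ 2 + deriv f (g z) * iteratedDeriv 2 g z := by
  rw [id2, (deriv_comp_ev hf hg).deriv_eq]
  have h1 : HasDerivAt (fun w => deriv f (g w)) (iteratedDeriv 2 f (g z) * deriv g z) z := by
    have := ((analyticAt_deriv hf).differentiableAt.hasDerivAt).comp z
      hg.differentiableAt.hasDerivAt
    rw [id2]; exact this
  have h2 : HasDerivAt (deriv g) (iteratedDeriv 2 g z) z := by
    rw [id2]; exact (analyticAt_deriv hg).differentiableAt.hasDerivAt
  have := (h1.mul h2).deriv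
  refine this.trans ?_; ring

lemma i2_comp_ev {f g : ℂ → ℂ} {z : ℂ} (hf : AnalyticAt ℂ f (g z)) (hg : AnalyticAt ℂ g z) :
    iteratedDeriv 2 (fun w => f (g w)) =ᶠ[nhds z] fun w =>
      iteratedDeriv 2 f (g w) * (deriv g w) ^ 2 + deriv f (g w) * iteratedDeriv 2 g w := by
  filter_upwards [ev_comp hf hg] with w hw using i2_comp hw.1 hw.2

lemma i3_comp {f g : ℂ → ℂ} {z : ℂ} (hf : AnalyticAt ℂ f (g z)) (hg : AnalyticAt ℂ g z) :
    iteratedDeriv 3 (fun w => f (g w)) z =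
      iteratedDeriv 3 f (g z) * (deriv g z) ^ 3 +
        3 * iteratedDeriv 2 f (g z) * deriv g z * iteratedDeriv 2 g z +
        deriv f (g z) * iteratedDeriv 3 g z := by
  rw [id3, (i2_comp_ev hf hg).deriv_eq]
  have hg' : HasDerivAt g (deriv g z) z := hg.differentiableAt.hasDerivAt
  have af2 : AnalyticAt ℂ (iteratedDeriv 2 f) (g z) := by
    rw [id2]; exact analyticAt_deriv (analyticAt_deriv hf)
  have ag2 : AnalyticAt ℂ (iteratedDeriv 2 g) z := by
    rw [id2]; exact analyticAt_deriv (analyticAt_deriv hg)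
  have hA : HasDerivAt (fun w => iteratedDeriv 2 f (g w)) (iteratedDeriv 3 f (g z) * deriv g z) z := by
    have := (af2.differentiableAt.hasDerivAt).comp z hg'
    rw [id3]; exact this
  have hB : HasDerivAt (deriv g) (iteratedDeriv 2 g z) z := by
    rw [id2]; exact (analyticAt_deriv hg).differentiableAt.hasDerivAt
  have hC : HasDerivAt (fun w => deriv f (g w)) (iteratedDeriv 2 f (g z) * deriv g z) z := by
    have := ((analyticAt_deriv hf).differentiableAt.hasDerivAt).comp z hg'
    rw [id2]; exact this
  have hD : HasDerivAt (iteratedDeriv 2 g) (iteratedDeriv 3 g z) z := by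
    rw [id3]; exact ag2.differentiableAt.hasDerivAt
  have := ((hA.mul (hB.pow 2)).add (hC.mul hD)).deriv
  refine this.trans ?_; rw [Pi.pow_apply]; push_cast; ring


lemma schwarzian_congr {f g : ℂ → ℂ} {z : ℂ} (h : f =ᶠ[nhds z] g) :
    schwarzian f z = schwarzian g z := by
  unfold schwarzian
  simp only [id3, id2]
  rw [h.deriv_eq, h.deriv.deriv_eq, h.deriv.deriv.deriv_eq]

lemma schwarzian_comp {f g : ℂ → ℂ} {z : ℂ} (hf : AnalyticAt ℂ f (g z)) (hg : AnalyticAt ℂ g z)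
    (hf' : deriv f (g z) ≠ 0) (hg' : deriv g z ≠ 0) :
    schwarzian (fun w => f (g w)) z = schwarzian f (g z) * (deriv g z) ^ 2 + schwarzian g z := by
  unfold schwarzian
  rw [i3_comp hf hg, i2_comp hf hg, deriv_comp_pt hf hg]
  have key : ∀ A3 A2 B3 B2 u v : ℂ, u ≠ 0 → v ≠ 0 →
      (A3*v^3 + 3*A2*v*B2 + u*B3)/(u*v) - 3/2*((A2*v^2+u*B2)/(u*v))^2
      = (A3/u - 3/2*(A2/u)^2)*v^2 + (B3/v - 3/2*(B2/v)^2) := by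
    intro A3 A2 B3 B2 u v hu hv
    field_simp
    ring_nf
  exact key _ _ _ _ _ _ hf' hg'

section Moeb
variable (a b c d : ℂ)

lemma moeb_analyticAt {z : ℂ} (hz : c * z + d ≠ 0) :
    AnalyticAt ℂ (fun w => (a * w + b) / (c * w + d)) z :=
  (((analyticAt_const.mul analyticAt_id).add analyticAt_const).div
    ((analyticAt_const.mul analyticAt_id).add analyticAt_const) hz)

lemma moeb_hasDerivAt {z : ℂ} (hz : c * z + d ≠ 0) :
    HasDerivAt (fun w => (a * w + b) / (c * w + d)) ((a * d - b * c) / (c * z + d) ^ 2) z := by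
  have h1 : HasDerivAt (fun w => a * w + b) a z := by
    simpa using ((hasDerivAt_id z).const_mul a).add_const b
  have h2 : HasDerivAt (fun w => c * w + d) c z := by
    simpa using ((hasDerivAt_id z).const_mul c).add_const d
  refine (h1.div h2 hz).congr_deriv ?_
  field_simp
  ring

lemma moeb_ne_ev {z : ℂ} (hz : c * z + d ≠ 0) : ∀ᶠ w in nhds z, c * w + d ≠ 0 :=
  ((continuous_const.mul continuous_id).add continuous_const).continuousAt.eventually_ne hz

lemma moeb_deriv_ev {z : ℂ} (hz : c * z + d ≠ 0) :
    deriv (fun w => (a * w + b) / (c * w + d)) =ᶠ[nhds z]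
      fun w => (a * d - b * c) / (c * w + d) ^ 2 := by
  filter_upwards [moeb_ne_ev c d hz] with w hw using (moeb_hasDerivAt a b c d hw).deriv

lemma pow2_inv_hasDerivAt (e : ℂ) {z : ℂ} (hz : c * z + d ≠ 0) :
    HasDerivAt (fun w => e / (c * w + d) ^ 2) (-2 * c * e / (c * z + d) ^ 3) z := by
  have h2 : HasDerivAt (fun w => c * w + d) c z := by
    simpa using ((hasDerivAt_id z).const_mul c).add_const d
  refine ((hasDerivAt_const z e).div (h2.pow 2) (pow_ne_zero 2 hz)).congr_deriv ?_
  simp only [Pi.pow_apply]; push_cast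
  field_simp
  ring

lemma pow3_inv_hasDerivAt (e : ℂ) {z : ℂ} (hz : c * z + d ≠ 0) :
    HasDerivAt (fun w => e / (c * w + d) ^ 3) (-3 * c * e / (c * z + d) ^ 4) z := by
  have h2 : HasDerivAt (fun w => c * w + d) c z := by
    simpa using ((hasDerivAt_id z).const_mul c).add_const d
  refine ((hasDerivAt_const z e).div (h2.pow 3) (pow_ne_zero 3 hz)).congr_deriv ?_
  simp only [Pi.pow_apply]; push_cast
  field_simp
  ring

lemma moeb_i2 {z : ℂ} (hz : c * z + d ≠ 0) :
    iteratedDeriv 2 (fun w => (a * w + b) / (c * w + d)) z =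
      -2 * c * (a * d - b * c) / (c * z + d) ^ 3 := by
  rw [id2, (moeb_deriv_ev a b c d hz).deriv_eq]
  exact (pow2_inv_hasDerivAt c d (a * d - b * c) hz).deriv

lemma moeb_i2_ev {z : ℂ} (hz : c * z + d ≠ 0) :
    iteratedDeriv 2 (fun w => (a * w + b) / (c * w + d)) =ᶠ[nhds z]
      fun w => -2 * c * (a * d - b * c) / (c * w + d) ^ 3 := by
  filter_upwards [moeb_ne_ev c d hz] with w hw using moeb_i2 a b c d hw

lemma moeb_i3 {z : ℂ} (hz : c * z + d ≠ 0) :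
    iteratedDeriv 3 (fun w => (a * w + b) / (c * w + d)) z =
      6 * c ^ 2 * (a * d - b * c) / (c * z + d) ^ 4 := by
  rw [id3, (moeb_i2_ev a b c d hz).deriv_eq]
  have := (pow3_inv_hasDerivAt c d (-2 * c * (a * d - b * c)) hz).deriv
  rw [this]; ring

lemma moeb_deriv_ne {z : ℂ} (hz : c * z + d ≠ 0) (hdet : a * d - b * c ≠ 0) :
    deriv (fun w => (a * w + b) / (c * w + d)) z ≠ 0 := by
  rw [(moeb_hasDerivAt a b c d hz).deriv]
  exact div_ne_zero hdet (pow_ne_zero 2 hz)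

lemma schwarzian_moeb {z : ℂ} (hz : c * z + d ≠ 0) (hdet : a * d - b * c ≠ 0) :
    schwarzian (fun w => (a * w + b) / (c * w + d)) z = 0 := by
  unfold schwarzian
  rw [moeb_i3 a b c d hz, moeb_i2 a b c d hz, (moeb_hasDerivAt a b c d hz).deriv]
  field_simp
  ring

end Moeb


/-- The Schwarz derivative of a `ρ`-equivariant function is an automorphic form of
weight 4: `S(h)(γ·z) = (cz+d)⁴ S(h)(z)`. -/
theorem schwarzian_of_equivariant_is_weight_four
    (Γ : Subgroup (Matrix.SpecialLinearGroup (Fin 2) ℝ))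
    (ρ : Γ →* GL (Fin 2) ℂ) (h : ℂ → ℂ)
    (hmero : MeromorphicOn h {z : ℂ | 0 < z.im})
    (hequiv : IsRhoEquivariant Γ ρ h) :
    ∀ γ : Γ, ∀ z : ℂ, 0 < z.im →
      AnalyticAt ℂ h z → deriv h z ≠ 0 →
      (ρ γ : Matrix (Fin 2) (Fin 2) ℂ) 1 0 * h z + (ρ γ : Matrix (Fin 2) (Fin 2) ℂ) 1 1 ≠ 0 →
      AnalyticAt ℂ h (moebius γ z) → deriv h (moebius γ z) ≠ 0 →
      schwarzian h (moebius γ z) = (jfac γ z) ^ 4 * schwarzian h z := by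
  intro γ z hz hA hD hrho hAg hDg
  set M : Matrix (Fin 2) (Fin 2) ℝ := ((γ : Matrix.SpecialLinearGroup (Fin 2) ℝ) : Matrix (Fin 2) (Fin 2) ℝ) with hM
  set A : ℂ := ((M 0 0 : ℝ) : ℂ)
  set B : ℂ := ((M 0 1 : ℝ) : ℂ)
  set C : ℂ := ((M 1 0 : ℝ) : ℂ)
  set D : ℂ := ((M 1 1 : ℝ) : ℂ)
  set P : Matrix (Fin 2) (Fin 2) ℂ := ((ρ γ : GL (Fin 2) ℂ) : Matrix (Fin 2) (Fin 2) ℂ) with hP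
  have hdetR : M 0 0 * M 1 1 - M 0 1 * M 1 0 = 1 := by
    have := (γ : Matrix.SpecialLinearGroup (Fin 2) ℝ).prop
    rwa [Matrix.det_fin_two] at this
  have hdet : A * D - B * C = 1 := by
    simp only [A, B, C, D]
    push_cast
    exact_mod_cast congrArg (fun x : ℝ => (x : ℂ)) hdetR
  have hmoe : moebius (γ : Matrix.SpecialLinearGroup (Fin 2) ℝ) = fun w => (A * w + B) / (C * w + D) := rfl
  have hj : jfac (γ : Matrix.SpecialLinearGroup (Fin 2) ℝ) z = C * z + D := rfl
  have hjne : C * z + D ≠ 0 := by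
    intro h0
    have h1 : (M 1 0 : ℝ) * z.im = 0 := by
      have := congrArg Complex.im h0
      simpa [C, D, Complex.add_im, Complex.mul_im] using this
    have hc : M 1 0 = 0 := by
      rcases mul_eq_zero.mp h1 with h' | h'
      · exact h'
      · exact absurd h' (ne_of_gt hz)
    have hd : M 1 1 = 0 := by
      have := congrArg Complex.re h0
      simp [C, D, hc, Complex.add_re, Complex.mul_re] at this
      exact this
    rw [hc, hd] at hdetR
    simp at hdetR
  have hPdet : P 0 0 * P 1 1 - P 0 1 * P 1 0 ≠ 0 := by
    have hU : IsUnit P := ⟨ρ γ, rfl⟩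
    have := (Matrix.isUnit_iff_isUnit_det P).mp hU
    rw [Matrix.det_fin_two] at this
    exact this.ne_zero
  have hgA : AnalyticAt ℂ (moebius (γ : Matrix.SpecialLinearGroup (Fin 2) ℝ)) z := by
    rw [hmoe]; exact moeb_analyticAt A B C D hjne
  have hev : (fun w => h (moebius (γ : Matrix.SpecialLinearGroup (Fin 2) ℝ) w)) =ᶠ[nhds z]
      fun w => (P 0 0 * h w + P 0 1) / (P 1 0 * h w + P 1 1) := by
    have e1 : ∀ᶠ w in nhds z, 0 < w.im :=
      (isOpen_lt continuous_const Complex.continuous_im).eventually_mem hz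
    have e2 := hA.eventually_analyticAt
    have e3 : ∀ᶠ w in nhds z, AnalyticAt ℂ h (moebius (γ : Matrix.SpecialLinearGroup (Fin 2) ℝ) w) :=
      hgA.continuousAt.eventually hAg.eventually_analyticAt
    have e4 : ∀ᶠ w in nhds z, P 1 0 * h w + P 1 1 ≠ 0 :=
      ((continuousAt_const.mul hA.continuousAt).add continuousAt_const).eventually_ne hrho
    filter_upwards [e1, e2, e3, e4] with w h1 h2 h3 h4
    exact hequiv γ w h1 h2 h3 h4
  have hgd : deriv (moebius (γ : Matrix.SpecialLinearGroup (Fin 2) ℝ)) z = 1 / (C * z + D) ^ 2 := by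
    rw [hmoe, (moeb_hasDerivAt A B C D hjne).deriv, hdet]
  have hgd0 : deriv (moebius (γ : Matrix.SpecialLinearGroup (Fin 2) ℝ)) z ≠ 0 := by
    rw [hgd]; exact div_ne_zero one_ne_zero (pow_ne_zero 2 hjne)
  have k1 := schwarzian_comp hAg hgA hDg hgd0
  have k1' : schwarzian (moebius (γ : Matrix.SpecialLinearGroup (Fin 2) ℝ)) z = 0 := by
    rw [hmoe]
    exact schwarzian_moeb A B C D hjne (by rw [hdet]; exact one_ne_zero)
  have k2 := schwarzian_comp (f := fun u => (P 0 0 * u + P 0 1) / (P 1 0 * u + P 1 1)) (g := h)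
    (moeb_analyticAt _ _ _ _ hrho) hA (moeb_deriv_ne _ _ _ _ hrho hPdet) hD
  have k2' : schwarzian (fun u => (P 0 0 * u + P 0 1) / (P 1 0 * u + P 1 1)) (h z) = 0 :=
    schwarzian_moeb _ _ _ _ hrho hPdet
  have keq := schwarzian_congr hev
  rw [k1', add_zero, hgd] at k1
  rw [k2', zero_mul, zero_add] at k2
  have main : schwarzian h (moebius (γ : Matrix.SpecialLinearGroup (Fin 2) ℝ) z) *
      (1 / (C * z + D) ^ 2) ^ 2 = schwarzian h z := by
    rw [← k1, keq, k2]
  rw [hj]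
  field_simp at main
  linear_combination main
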